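/- Let G be a group and let A ⊆ G contain two distinct elements x, y satisfying the braid relation xyx = yxy. Then the Dehn quandle D(A^G) admits no right order and no left order. (Right order: a strict linear order < with a < b implying a*c < b*c for all c; left order: a < b implying c*a < c*b for all c.) -/
import Mathlib


/-- The set of all conjugates of elements of `S` in `G`. -/
def conjSet (G : Type*) [Group G] (S : Set G) : Set G :=
  {x | ∃ s ∈ S, ∃ g : G, x = g * s * g⁻¹}

theorem conjSet.conj_mem {G : Type*} [Group G] {S : Set G} {x : G}
    (hx : x ∈ conjSet G S) (g : G) : g * x * g⁻¹ ∈ conjSet G S := by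
  obtain ⟨s, hs, h, rfl⟩ := hx
  exact ⟨s, hs, g * h, by group⟩

/-- The Dehn quandle operation `x * y = y x y⁻¹` on the set of conjugates of `S`. -/
def dehnOp {G : Type*} [Group G] {S : Set G} (x y : conjSet G S) : conjSet G S :=
  ⟨(y : G) * (x : G) * (y : G)⁻¹, conjSet.conj_mem x.2 (y : G)⟩

theorem aux_right {G : Type*} [Group G] {A : Set G} {x y : G} (hx : x ∈ A) (hy : y ∈ A)
    (hbraid : x * y * x = y * x * y)
    (r : conjSet G A → conjSet G A → Prop)
    (htr : ∀ {a b c}, r a b → r b c → r a c)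
    (hirr : ∀ a, ¬ r a a)
    (hmul : ∀ a b c, r a b → r (dehnOp a c) (dehnOp b c)) :
    ¬ r ⟨x, x, hx, 1, by group⟩ ⟨y, y, hy, 1, by group⟩ := by
  intro h
  set X : conjSet G A := ⟨x, x, hx, 1, by group⟩ with hXdef
  set Y : conjSet G A := ⟨y, y, hy, 1, by group⟩ with hYdef
  have h1 : dehnOp Y Y = Y := Subtype.ext (by show y * y * y⁻¹ = y; group)
  have h2 : dehnOp (dehnOp X Y) X = Y := Subtype.ext (by
    show x * (y * x * y⁻¹) * x⁻¹ = y
    have e : x * (y * x * y⁻¹) * x⁻¹ = (x * y * x) * (y⁻¹ * x⁻¹) := by group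
    rw [e, hbraid]; group)
  have h3 : dehnOp (dehnOp Y X) Y = X := Subtype.ext (by
    show y * (x * y * x⁻¹) * y⁻¹ = x
    have e : y * (x * y * x⁻¹) * y⁻¹ = (y * x * y) * (x⁻¹ * y⁻¹) := by group
    rw [e, ← hbraid]; group)
  have s1 := hmul _ _ Y h
  rw [h1] at s1
  have s2 := hmul _ _ X s1
  rw [h2] at s2
  have s3 := hmul _ _ Y s2
  rw [h1, h3] at s3
  exact hirr _ (htr h s3)

theorem aux_left {G : Type*} [Group G] {A : Set G} {x y : G} (hx : x ∈ A) (hy : y ∈ A)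
    (hbraid : x * y * x = y * x * y)
    (r : conjSet G A → conjSet G A → Prop)
    (htr : ∀ {a b c}, r a b → r b c → r a c)
    (hirr : ∀ a, ¬ r a a)
    (hmul : ∀ a b c, r a b → r (dehnOp c a) (dehnOp c b)) :
    ¬ r ⟨x, x, hx, 1, by group⟩ ⟨y, y, hy, 1, by group⟩ := by
  intro h
  set X : conjSet G A := ⟨x, x, hx, 1, by group⟩ with hXdef
  set Y : conjSet G A := ⟨y, y, hy, 1, by group⟩ with hYdef
  have h1 : dehnOp X X = X := Subtype.ext (by show x * x * x⁻¹ = x; group)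
  have h2 : dehnOp Y (dehnOp X Y) = X := Subtype.ext (by
    show (y * x * y⁻¹) * y * (y * x * y⁻¹)⁻¹ = x
    have e : (y * x * y⁻¹) * y * (y * x * y⁻¹)⁻¹ = (y * x * y) * (x⁻¹ * y⁻¹) := by group
    rw [e, ← hbraid]; group)
  have h3 : dehnOp X (dehnOp Y X) = Y := Subtype.ext (by
    show (x * y * x⁻¹) * x * (x * y * x⁻¹)⁻¹ = y
    have e : (x * y * x⁻¹) * x * (x * y * x⁻¹)⁻¹ = (x * y * x) * (y⁻¹ * x⁻¹) := by group
    rw [e, hbraid]; group)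
  have s1 := hmul _ _ X h
  rw [h1] at s1
  have s2 := hmul _ _ Y s1
  rw [h2] at s2
  have s3 := hmul _ _ X s2
  rw [h3, h1] at s3
  exact hirr _ (htr h s3)

/-- If `A ⊆ G` contains distinct elements `x, y` with `xyx = yxy`, then the Dehn quandle
`D(A^G)` admits no right order and no left order. -/
theorem dehn_quandle_not_orderable (G : Type*) [Group G] (A : Set G) (x y : G)
    (hx : x ∈ A) (hy : y ∈ A) (hne : x ≠ y) (hbraid : x * y * x = y * x * y) :
    (¬ ∃ r : conjSet G A → conjSet G A → Prop, IsStrictTotalOrder (conjSet G A) r ∧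
        ∀ a b c : conjSet G A, r a b → r (dehnOp a c) (dehnOp b c)) ∧
    (¬ ∃ r : conjSet G A → conjSet G A → Prop, IsStrictTotalOrder (conjSet G A) r ∧
        ∀ a b c : conjSet G A, r a b → r (dehnOp c a) (dehnOp c b)) := by
  constructor
  · rintro ⟨r, hto, hmul⟩
    haveI := hto
    have htr : ∀ {a b c}, r a b → r b c → r a c := fun hab hbc => trans_of r hab hbc
    have hirr : ∀ a, ¬ r a a := fun a => irrefl_of r a
    rcases trichotomous_of r (⟨x, x, hx, 1, by group⟩ : conjSet G A)
        (⟨y, y, hy, 1, by group⟩ : conjSet G A) with hlt | heq | hgt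
    · exact aux_right hx hy hbraid r htr hirr hmul hlt
    · exact hne (congrArg Subtype.val heq)
    · exact aux_right hy hx hbraid.symm r htr hirr hmul hgt
  · rintro ⟨r, hto, hmul⟩
    haveI := hto
    have htr : ∀ {a b c}, r a b → r b c → r a c := fun hab hbc => trans_of r hab hbc
    have hirr : ∀ a, ¬ r a a := fun a => irrefl_of r a
    rcases trichotomous_of r (⟨x, x, hx, 1, by group⟩ : conjSet G A)
        (⟨y, y, hy, 1, by group⟩ : conjSet G A) with hlt | heq | hgt
    · exact aux_left hx hy hbraid r htr hirr hmul hlt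
    · exact hne (congrArg Subtype.val heq)
    · exact aux_left hy hx hbraid.symm r htr hirr hmul hgt
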